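/- Let τ > 0, G ∈ B_c, 0 < t < τ, and u(x,t) = −∫_ℝ G(ξ) ∂/∂ξ [ e^{ξ²/(4τ)} Θ_t(x−ξ) ] dξ. Then for every x ∈ ℝ, |u(x,t)| ≤ ‖G‖'_∞ e^{x²/(4(τ−t))} / (2√(πt)), and moreover u(x,t) e^{−x²/(4(τ−t))} → 0 as |x| → ∞. -/

import Mathlib

open MeasureTheory Filter Topology

/-- The Gauss–Weierstrass heat kernel `Θ_t(x) = (4πt)^(−1/2) exp(−x²/(4t))` for `t > 0`. -/
noncomputable def heatK (t x : ℝ) : ℝ :=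
  (Real.sqrt (4 * Real.pi * t))⁻¹ * Real.exp (-x ^ 2 / (4 * t))

/-- `G ∈ B_c`: continuous, vanishing at `−∞`, with a finite limit at `+∞`. -/
def memBc (G : ℝ → ℝ) : Prop :=
  Continuous G ∧ Tendsto G atBot (nhds (0 : ℝ)) ∧ ∃ L : ℝ, Tendsto G atTop (nhds L)

/-- `‖G‖'_∞ = sup_{x<y} |G(x) − G(y)|`. -/
noncomputable def normBc (G : ℝ → ℝ) : ℝ :=
  sSup {r : ℝ | ∃ x y : ℝ, x < y ∧ r = |G x - G y|}

/-- Heat convolution in the weighted space `A_{c,τ}`: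
`u(x,t) = −∫ G(ξ) ∂/∂ξ [ e^{ξ²/(4τ)} Θ_t(x−ξ) ] dξ`. -/
noncomputable def wConv (G : ℝ → ℝ) (τ t x : ℝ) : ℝ :=
  -∫ ξ : ℝ, G ξ * deriv (fun η : ℝ => Real.exp (η ^ 2 / (4 * τ)) * heatK t (x - η)) ξ

noncomputable def gker (a p ξ : ℝ) : ℝ := 2 * a * (ξ - p) * Real.exp (-a * (ξ - p) ^ 2)

lemma gker_cont (a p : ℝ) : Continuous (gker a p) := by
  unfold gker; fun_prop

lemma hasDerivAt_bump (a p ξ : ℝ) :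
    HasDerivAt (fun η : ℝ => -Real.exp (-a * (η - p) ^ 2)) (gker a p ξ) ξ := by
  have h1 : HasDerivAt (fun η : ℝ => η - p) 1 ξ := (hasDerivAt_id ξ).sub_const p
  have h2 : HasDerivAt (fun η : ℝ => -Real.exp (-a * (η - p) ^ 2)) _ ξ :=
    ((h1.pow 2).const_mul (-a)).exp.neg
  convert h2 using 1
  simp only [gker, pow_one, Pi.pow_apply]; norm_num; ring

lemma bump_tendsto_atTop (a p : ℝ) (ha : 0 < a) :
    Tendsto (fun η : ℝ => -Real.exp (-a * (η - p) ^ 2)) atTop (nhds 0) := by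
  have h0 : Tendsto (fun η : ℝ => (η - p) ^ 2) atTop atTop := by
    have := (tendsto_pow_atTop (two_ne_zero)).comp
      (tendsto_atTop_add_const_right atTop (-p) tendsto_id)
    simpa [Function.comp_def, sub_eq_add_neg] using this
  have h2 := tendsto_neg_atTop_atBot.comp (h0.const_mul_atTop ha)
  have h3 := (Real.tendsto_exp_atBot.comp h2).neg
  simpa [Function.comp_def, neg_mul] using h3

lemma bump_tendsto_atBot (a p : ℝ) (ha : 0 < a) :
    Tendsto (fun η : ℝ => -Real.exp (-a * (η - p) ^ 2)) atBot (nhds 0) := by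
  have h0 : Tendsto (fun η : ℝ => (η - p) ^ 2) atBot atTop := by
    have hneg : Tendsto (fun η : ℝ => -(η - p)) atBot atTop := by
      have := tendsto_neg_atBot_atTop.comp (tendsto_atBot_add_const_right atBot (-p) tendsto_id)
      simpa [Function.comp_def, sub_eq_add_neg] using this
    exact ((tendsto_pow_atTop (two_ne_zero)).comp hneg).congr fun η => by
      simp only [Function.comp_def]; ring
  have h2 := tendsto_neg_atTop_atBot.comp (h0.const_mul_atTop ha)
  have h3 := (Real.tendsto_exp_atBot.comp h2).neg
  simpa [Function.comp_def, neg_mul] using h3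

lemma gker_integrable (a p : ℝ) (ha : 0 < a) : Integrable (gker a p) := by
  have h : Integrable (fun y : ℝ => 2 * a * (y * Real.exp (-a * y ^ 2))) :=
    (integrable_mul_exp_neg_mul_sq ha).const_mul (2 * a)
  have h2 := h.comp_sub_right p
  convert h2 using 1
  funext y
  simp only [gker, neg_mul]
  ring

lemma integral_gker_Ioi (a p : ℝ) (ha : 0 < a) : ∫ ξ in Set.Ioi p, gker a p ξ = 1 := by
  have h := integral_Ioi_of_hasDerivAt_of_tendsto' (a := p) (m := 0)
    (fun y _ => hasDerivAt_bump a p y) (gker_integrable a p ha).integrableOn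
    (bump_tendsto_atTop a p ha)
  simpa using h

lemma integral_gker_Iic (a p : ℝ) (ha : 0 < a) : ∫ ξ in Set.Iic p, gker a p ξ = -1 := by
  have h := integral_Iic_of_hasDerivAt_of_tendsto' (a := p) (m := 0)
    (fun y _ => hasDerivAt_bump a p y) (gker_integrable a p ha).integrableOn
    (bump_tendsto_atBot a p ha)
  simpa using h

lemma integral_gker (a p : ℝ) (ha : 0 < a) : ∫ ξ, gker a p ξ = 0 := by
  rw [← intervalIntegral.integral_Iic_add_Ioi (gker_integrable a p ha).integrableOn
    (gker_integrable a p ha).integrableOn, integral_gker_Iic a p ha, integral_gker_Ioi a p ha]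
  norm_num

lemma gker_nonneg {a : ℝ} (ha : 0 < a) {p ξ : ℝ} (h : p ≤ ξ) : 0 ≤ gker a p ξ :=
  mul_nonneg (mul_nonneg (by positivity) (sub_nonneg.2 h)) (Real.exp_pos _).le

lemma gker_nonpos {a : ℝ} (ha : 0 < a) {p ξ : ℝ} (h : ξ ≤ p) : gker a p ξ ≤ 0 :=
  mul_nonpos_of_nonpos_of_nonneg
    (mul_nonpos_of_nonneg_of_nonpos (by positivity) (sub_nonpos.2 h)) (Real.exp_pos _).le

lemma normBc_bddAbove {g : ℝ → ℝ} {B : ℝ} (hB : ∀ y, |g y| ≤ B) :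
    BddAbove {r : ℝ | ∃ x y : ℝ, x < y ∧ r = |g x - g y|} := by
  refine ⟨2 * B, ?_⟩
  rintro r ⟨x, y, -, rfl⟩
  have h1 := abs_le.mp (hB x)
  have h2 := abs_le.mp (hB y)
  rw [abs_le]; constructor <;> linarith

lemma integral_gker_le (a : ℝ) (ha : 0 < a) (p : ℝ) (g : ℝ → ℝ) (hgc : Continuous g)
    (B : ℝ) (hB : ∀ y, |g y| ≤ B) :
    ∫ ξ, g ξ * gker a p ξ ≤ normBc g := by
  set c := g p with hc
  set M := normBc g with hM
  have hki := gker_integrable a p ha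
  have hgk : Integrable (fun ξ => g ξ * gker a p ξ) :=
    hki.bdd_mul hgc.aestronglyMeasurable (Filter.Eventually.of_forall fun y => by simpa [Real.norm_eq_abs] using hB y)
  have hck : Integrable (fun ξ => (g ξ - c) * gker a p ξ) := by
    have := hgk.sub (hki.const_mul c)
    refine this.congr ?_
    filter_upwards with ξ
    simp only [Pi.sub_apply]; ring
  have hMbound : ∀ u v : ℝ, u < v → |g u - g v| ≤ M :=
    fun u v huv => le_csSup (normBc_bddAbove hB) ⟨u, v, huv, rfl⟩
  set Tset := (fun s => g s - c) '' Set.Ioi p with hTset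
  set Sset := (fun s => c - g s) '' Set.Iio p with hSset
  have hTne : Tset.Nonempty := ⟨g (p + 1) - c, ⟨p + 1, lt_add_one p, rfl⟩⟩
  have hSne : Sset.Nonempty := ⟨c - g (p - 1), ⟨p - 1, by simp, rfl⟩⟩
  have hTbdd : BddAbove Tset := by
    refine ⟨2 * B, ?_⟩; rintro r ⟨s, -, rfl⟩
    have h1 := abs_le.mp (hB s); have h2 := abs_le.mp (hB p)
    simp only [hc]; linarith
  have hSbdd : BddAbove Sset := by
    refine ⟨2 * B, ?_⟩; rintro r ⟨s, -, rfl⟩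
    have h1 := abs_le.mp (hB s); have h2 := abs_le.mp (hB p)
    simp only [hc]; linarith
  set T := sSup Tset with hT
  set S := sSup Sset with hS
  have hTle : ∀ s, p < s → g s - c ≤ T := fun s hs => le_csSup hTbdd ⟨s, hs, rfl⟩
  have hSle : ∀ s, s < p → c - g s ≤ S := fun s hs => le_csSup hSbdd ⟨s, hs, rfl⟩
  have hTS : T + S ≤ M := by
    have hTb : T ≤ M - S := by
      refine csSup_le hTne ?_
      rintro u ⟨s', hs', rfl⟩
      show g s' - c ≤ M - S
      have hSb : S ≤ M - (g s' - c) := by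
        refine csSup_le hSne ?_
        rintro v ⟨s, hs, rfl⟩
        show c - g s ≤ M - (g s' - c)
        have h1 := hMbound s s' (hs.trans hs')
        have h2 := neg_abs_le (g s - g s')
        linarith
      linarith
    linarith
  have hsplit : ∫ ξ, g ξ * gker a p ξ = ∫ ξ, (g ξ - c) * gker a p ξ := by
    have h1 : ∫ ξ, (g ξ - c) * gker a p ξ
        = (∫ ξ, g ξ * gker a p ξ) - c * ∫ ξ, gker a p ξ := by
      rw [← integral_const_mul c, ← integral_sub hgk (hki.const_mul c)]
      congr 1; funext ξ; ring
    rw [h1, integral_gker a p ha]; ring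
  rw [hsplit, ← intervalIntegral.integral_Iic_add_Ioi hck.integrableOn hck.integrableOn]
  have hIoi : ∫ ξ in Set.Ioi p, (g ξ - c) * gker a p ξ ≤ T := by
    have hmono : ∫ ξ in Set.Ioi p, (g ξ - c) * gker a p ξ
        ≤ ∫ ξ in Set.Ioi p, T * gker a p ξ := by
      refine setIntegral_mono_on hck.integrableOn (hki.const_mul T).integrableOn
        measurableSet_Ioi ?_
      intro s hs
      exact mul_le_mul_of_nonneg_right (hTle s hs) (gker_nonneg ha (le_of_lt hs))
    rwa [integral_const_mul, integral_gker_Ioi a p ha, mul_one] at hmono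
  have hIic : ∫ ξ in Set.Iic p, (g ξ - c) * gker a p ξ ≤ S := by
    have hmono : ∫ ξ in Set.Iic p, (g ξ - c) * gker a p ξ
        ≤ ∫ ξ in Set.Iic p, (-S) * gker a p ξ := by
      refine setIntegral_mono_on hck.integrableOn (hki.const_mul (-S)).integrableOn
        measurableSet_Iic ?_
      intro s hs
      rcases lt_or_eq_of_le (show s ≤ p from hs) with hs' | rfl
      · exact mul_le_mul_of_nonpos_right (by linarith [hSle s hs']) (gker_nonpos ha hs)
      · simp [gker]
    rwa [integral_const_mul, integral_gker_Iic a p ha, mul_neg_one, neg_neg] at hmono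
  linarith

lemma normBc_neg (g : ℝ → ℝ) : normBc (fun x => -g x) = normBc g := by
  unfold normBc
  congr 1
  ext r
  constructor <;> rintro ⟨x, y, hxy, rfl⟩ <;> exact ⟨x, y, hxy, by
    rw [show ∀ u v : ℝ, -u - -v = -(u - v) by intros; ring, abs_neg]⟩

lemma abs_integral_gker_le (a : ℝ) (ha : 0 < a) (p : ℝ) (g : ℝ → ℝ) (hgc : Continuous g)
    (B : ℝ) (hB : ∀ y, |g y| ≤ B) :
    |∫ ξ, g ξ * gker a p ξ| ≤ normBc g := by
  rw [abs_le]
  refine ⟨?_, integral_gker_le a ha p g hgc B hB⟩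
  have h := integral_gker_le a ha p (fun x => -g x) hgc.neg B (fun y => by simpa using hB y)
  rw [normBc_neg] at h
  have h2 : ∫ ξ, -g ξ * gker a p ξ = -∫ ξ, g ξ * gker a p ξ := by
    rw [← integral_neg]; congr 1; funext ξ; ring
  rw [h2] at h
  linarith

lemma bounded_of_limits {g : ℝ → ℝ} (hgc : Continuous g) {l L : ℝ}
    (hbot : Tendsto g atBot (nhds l)) (htop : Tendsto g atTop (nhds L)) :
    ∃ B : ℝ, ∀ x, |g x| ≤ B := by
  obtain ⟨X1, hX1⟩ := eventually_atTop.mp (htop.eventually (Metric.closedBall_mem_nhds L one_pos))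
  obtain ⟨X0, hX0⟩ := eventually_atBot.mp (hbot.eventually (Metric.closedBall_mem_nhds l one_pos))
  obtain ⟨B0, hB0⟩ := (isCompact_Icc (a := min X0 X1) (b := max X0 X1)).exists_bound_of_continuousOn
    hgc.continuousOn
  refine ⟨max B0 (max (|L| + 1) (|l| + 1)), fun x => ?_⟩
  rcases le_total x (min X0 X1) with h | h
  · have hx := hX0 x (h.trans (min_le_left _ _))
    rw [Real.dist_eq] at hx
    have : |g x| ≤ |l| + 1 := by
      have := abs_sub_abs_le_abs_sub (g x) l
      linarith
    exact this.trans (le_max_of_le_right (le_max_right _ _))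
  · rcases le_total x (max X0 X1) with h2 | h2
    · have := hB0 x ⟨h, h2⟩
      rw [Real.norm_eq_abs] at this
      exact this.trans (le_max_left _ _)
    · have hx := hX1 x ((le_max_right X0 X1).trans h2)
      rw [Real.dist_eq] at hx
      have : |g x| ≤ |L| + 1 := by
        have := abs_sub_abs_le_abs_sub (g x) L
        linarith
      exact this.trans (le_max_of_le_right (le_max_left _ _))

lemma wConv_eq (τ t x : ℝ) (hτ : 0 < τ) (ht : 0 < t) (htτ : t < τ) (G : ℝ → ℝ) :
    wConv G τ t x
      = (Real.exp (x ^ 2 / (4 * (τ - t))) * (2 * Real.sqrt (Real.pi * t))⁻¹) *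
        ∫ ξ, G ξ * gker ((τ - t) / (4 * t * τ)) (x * τ / (τ - t)) ξ := by
  unfold wConv
  have hτt : (0 : ℝ) < τ - t := sub_pos.2 htτ
  set a : ℝ := (τ - t) / (4 * t * τ) with ha_def
  set p : ℝ := x * τ / (τ - t) with hp_def
  set K : ℝ := Real.exp (x ^ 2 / (4 * (τ - t))) * (2 * Real.sqrt (Real.pi * t))⁻¹ with hK_def
  have hfun : (fun η : ℝ => Real.exp (η ^ 2 / (4 * τ)) * heatK t (x - η))
      = fun η => K * Real.exp (-a * (η - p) ^ 2) := by
    funext η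
    unfold heatK
    have hsqrt : Real.sqrt (4 * Real.pi * t) = 2 * Real.sqrt (Real.pi * t) := by
      rw [show (4 : ℝ) * Real.pi * t = 2 ^ 2 * (Real.pi * t) by ring,
        Real.sqrt_mul (by positivity), Real.sqrt_sq (by norm_num)]
    rw [hsqrt]
    have hexp : Real.exp (η ^ 2 / (4 * τ)) * Real.exp (-(x - η) ^ 2 / (4 * t))
        = Real.exp (x ^ 2 / (4 * (τ - t))) * Real.exp (-a * (η - p) ^ 2) := by
      rw [← Real.exp_add, ← Real.exp_add]
      congr 1
      have ht' : t ≠ 0 := ne_of_gt ht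
      have hτ' : τ ≠ 0 := ne_of_gt hτ
      have hτt' : τ - t ≠ 0 := ne_of_gt hτt
      rw [ha_def, hp_def]
      field_simp
      ring
    calc Real.exp (η ^ 2 / (4 * τ)) * ((2 * Real.sqrt (Real.pi * t))⁻¹
            * Real.exp (-(x - η) ^ 2 / (4 * t)))
        = (Real.exp (η ^ 2 / (4 * τ)) * Real.exp (-(x - η) ^ 2 / (4 * t)))
            * (2 * Real.sqrt (Real.pi * t))⁻¹ := by ring
      _ = K * Real.exp (-a * (η - p) ^ 2) := by rw [hexp, hK_def]; ring
  rw [hfun]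
  have hderiv : ∀ ξ : ℝ, deriv (fun η => K * Real.exp (-a * (η - p) ^ 2)) ξ
      = -K * gker a p ξ := by
    intro ξ
    have h := (hasDerivAt_bump a p ξ).const_mul (-K)
    have h2 : (fun η => -K * -Real.exp (-a * (η - p) ^ 2))
        = fun η => K * Real.exp (-a * (η - p) ^ 2) := by funext η; ring
    rw [h2] at h
    exact h.deriv
  have h3 : (fun ξ => G ξ * deriv (fun η => K * Real.exp (-a * (η - p) ^ 2)) ξ)
      = fun ξ => -K * (G ξ * gker a p ξ) := by
    funext ξ; rw [hderiv ξ]; ring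
  rw [h3, integral_const_mul]
  ring

lemma tendsto_aux (a : ℝ) (ha : 0 < a) (g : ℝ → ℝ) (hgc : Continuous g)
    (B : ℝ) (hB : ∀ y, |g y| ≤ B) (L' : ℝ) (ξf : ℝ → ℝ) (l : Filter ℝ)
    [l.IsCountablyGenerated] (hlim : ∀ s : ℝ, Tendsto (fun x => g (ξf x + s)) l (nhds L')) :
    Tendsto (fun x => ∫ s, g (ξf x + s) * gker a 0 s) l (nhds 0) := by
  have h := tendsto_integral_filter_of_dominated_convergence (μ := volume)
    (F := fun x (s : ℝ) => g (ξf x + s) * gker a 0 s) (f := fun s => L' * gker a 0 s)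
    (bound := fun s => B * |gker a 0 s|)
    (Eventually.of_forall fun x =>
      ((hgc.comp (continuous_const.add continuous_id)).mul (gker_cont a 0)).aestronglyMeasurable)
    (Eventually.of_forall fun x => Eventually.of_forall fun s => by
      rw [Real.norm_eq_abs, abs_mul]
      exact mul_le_mul_of_nonneg_right (hB _) (abs_nonneg _))
    ((gker_integrable a 0 ha).abs.const_mul B)
    (Eventually.of_forall fun s => (hlim s).mul_const _)
  rwa [integral_const_mul, integral_gker a 0 ha, mul_zero] at h

/-- `|u(x,t)| ≤ ‖G‖'_∞ e^{x²/(4(τ−t))}/(2√(πt))` for every `x`, and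
`u(x,t) e^{−x²/(4(τ−t))} → 0` as `|x| → ∞`. -/
theorem stmt15 (τ : ℝ) (hτ : 0 < τ) (G : ℝ → ℝ) (hG : memBc G)
    (t : ℝ) (ht : 0 < t) (htτ : t < τ) :
    (∀ x : ℝ, |wConv G τ t x|
      ≤ normBc G * Real.exp (x ^ 2 / (4 * (τ - t))) / (2 * Real.sqrt (Real.pi * t))) ∧
    Tendsto (fun x : ℝ => wConv G τ t x * Real.exp (-x ^ 2 / (4 * (τ - t))))
      atTop (nhds 0) ∧
    Tendsto (fun x : ℝ => wConv G τ t x * Real.exp (-x ^ 2 / (4 * (τ - t))))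
      atBot (nhds 0) := by
  obtain ⟨hGc, hGbot, L, hGtop⟩ := hG
  obtain ⟨B, hB⟩ := bounded_of_limits hGc hGbot hGtop
  have hτt : (0 : ℝ) < τ - t := sub_pos.2 htτ
  set a : ℝ := (τ - t) / (4 * t * τ) with ha_def
  have ha : 0 < a := by positivity
  have key : ∀ x : ℝ, wConv G τ t x
      = Real.exp (x ^ 2 / (4 * (τ - t))) * (2 * Real.sqrt (Real.pi * t))⁻¹ *
        ∫ ξ, G ξ * gker a (x * τ / (τ - t)) ξ := fun x => wConv_eq τ t x hτ ht htτ G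
  have hKpos : (0 : ℝ) < (2 * Real.sqrt (Real.pi * t))⁻¹ := by
    have : (0 : ℝ) < Real.sqrt (Real.pi * t) := Real.sqrt_pos.2 (by positivity)
    positivity
  refine ⟨?_, ?_, ?_⟩
  · intro x
    rw [key x, abs_mul]
    have habs : |Real.exp (x ^ 2 / (4 * (τ - t))) * (2 * Real.sqrt (Real.pi * t))⁻¹|
        = Real.exp (x ^ 2 / (4 * (τ - t))) * (2 * Real.sqrt (Real.pi * t))⁻¹ :=
      abs_of_pos (by positivity)
    rw [habs]
    have hle := abs_integral_gker_le a ha (x * τ / (τ - t)) G hGc B hB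
    calc Real.exp (x ^ 2 / (4 * (τ - t))) * (2 * Real.sqrt (Real.pi * t))⁻¹ *
          |∫ ξ, G ξ * gker a (x * τ / (τ - t)) ξ|
        ≤ Real.exp (x ^ 2 / (4 * (τ - t))) * (2 * Real.sqrt (Real.pi * t))⁻¹ * normBc G :=
          mul_le_mul_of_nonneg_left hle (by positivity)
      _ = normBc G * Real.exp (x ^ 2 / (4 * (τ - t))) / (2 * Real.sqrt (Real.pi * t)) := by
          rw [div_eq_mul_inv]; ring
  all_goals {
    have htrans : ∀ x : ℝ, (∫ ξ, G ξ * gker a (x * τ / (τ - t)) ξ)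
        = ∫ s, G (x * τ / (τ - t) + s) * gker a 0 s := by
      intro x
      rw [← integral_add_left_eq_self
        (fun ξ => G ξ * gker a (x * τ / (τ - t)) ξ) (x * τ / (τ - t))]
      congr 1
      funext s
      simp [gker, add_sub_cancel_left]
    have hfeq : ∀ x : ℝ, wConv G τ t x * Real.exp (-x ^ 2 / (4 * (τ - t)))
        = (2 * Real.sqrt (Real.pi * t))⁻¹ * ∫ s, G (x * τ / (τ - t) + s) * gker a 0 s := by
      intro x
      rw [key x, htrans x, show -x ^ 2 / (4 * (τ - t)) = -(x ^ 2 / (4 * (τ - t))) by ring,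
        Real.exp_neg]
      have hne : Real.exp (x ^ 2 / (4 * (τ - t))) ≠ 0 := Real.exp_ne_zero _
      field_simp
    first
    | · -- atTop
        have hξtop : Tendsto (fun x : ℝ => x * τ / (τ - t)) atTop atTop := by
          simp_rw [mul_div_assoc]
          exact Tendsto.atTop_mul_const (div_pos hτ hτt) tendsto_id
        have h := tendsto_aux a ha G hGc B hB L (fun x => x * τ / (τ - t)) atTop
          (fun s => hGtop.comp (tendsto_atTop_add_const_right atTop s hξtop))
        have h2 := h.const_mul ((2 * Real.sqrt (Real.pi * t))⁻¹)
        rw [mul_zero] at h2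
        exact Tendsto.congr (fun x => (hfeq x).symm) h2
    | · -- atBot
        have hξbot : Tendsto (fun x : ℝ => x * τ / (τ - t)) atBot atBot := by
          simp_rw [mul_div_assoc]
          exact Tendsto.atBot_mul_const (div_pos hτ hτt) tendsto_id
        have h := tendsto_aux a ha G hGc B hB 0 (fun x => x * τ / (τ - t)) atBot
          (fun s => hGbot.comp (tendsto_atBot_add_const_right atBot s hξbot))
        have h2 := h.const_mul ((2 * Real.sqrt (Real.pi * t))⁻¹)
        rw [mul_zero] at h2
        exact Tendsto.congr (fun x => (hfeq x).symm) h2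
  }
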